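/- Let T_∘ be a practical hidden sum on V = (F_2)^{n+d} with U(T_∘) = Span{e_{n+1},…,e_{n+d}} and matrices B_{e_1},…,B_{e_n} as in the structure theorem. Define the n×n matrix 𝔅_∘ over F_{2^d} whose (i,j) entry is the j-th row of B_{e_i} viewed as an element of F_{2^d}. Then 𝔅_∘ is symmetric with zero diagonal, and the dimension condition dim U(T_∘) = d is equivalent to 𝔅_∘ being full rank over F_2 (viewed as an n × nd binary matrix). -/
import Mathlib


open Matrix

/-- The upper unitriangular block matrix `[[I_n, B],[0, I_d]]` as an `(n+d) × (n+d)` matrix. -/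
def blockUT (n d : ℕ) (B : Matrix (Fin n) (Fin d) (ZMod 2)) :
    Matrix (Fin (n + d)) (Fin (n + d)) (ZMod 2) :=
  (Matrix.fromBlocks 1 B 0 1).submatrix finSumFinEquiv.symm finSumFinEquiv.symm

section helpers
variable {n d : ℕ}

lemma castAdd_ne_natAdd (i : Fin n) (k : Fin d) : Fin.castAdd d i ≠ Fin.natAdd n k := by
  intro h
  have h2 := congrArg Fin.val h
  simp only [Fin.coe_castAdd, Fin.coe_natAdd] at h2
  have := i.isLt
  omega

lemma single_natAdd (i : Fin n) (c : ZMod 2) (k : Fin d) :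
    (Pi.single (Fin.castAdd d i) c : Fin (n + d) → ZMod 2) (Fin.natAdd n k) = 0 :=
by
  rw [Pi.single_apply, if_neg (castAdd_ne_natAdd i k).symm]

lemma single_castAdd (i j : Fin n) (c : ZMod 2) :
    (Pi.single (Fin.castAdd d i) c : Fin (n + d) → ZMod 2) (Fin.castAdd d j)
      = if j = i then c else 0 := by
  rw [Pi.single_apply]

  simp [Fin.ext_iff]

lemma single_sum_mul (i : Fin n) (c : ZMod 2) (f : Fin n → ZMod 2) :
    ∑ j : Fin n, (Pi.single (Fin.castAdd d i) c : Fin (n + d) → ZMod 2) (Fin.castAdd d j) * f j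
      = c * f i := by
  rw [Finset.sum_eq_single i]
  · rw [single_castAdd, if_pos rfl]
  · intro j _ hj
    rw [single_castAdd, if_neg hj, zero_mul]
  · intro h; exact absurd (Finset.mem_univ i) h

lemma sumElim_comp (x : Fin (n + d) → ZMod 2) :
    x ∘ finSumFinEquiv = Sum.elim (fun i => x (Fin.castAdd d i)) (fun k => x (Fin.natAdd n k)) := by
  funext s; cases s <;> simp

lemma vecMul_blockUT (B : Matrix (Fin n) (Fin d) (ZMod 2)) (x : Fin (n + d) → ZMod 2) :
    x ᵥ* blockUT n d B = Sum.elim (fun i => x (Fin.castAdd d i))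
      (fun k => x (Fin.natAdd n k) + ∑ i : Fin n, x (Fin.castAdd d i) * B i k)
        ∘ finSumFinEquiv.symm := by
  rw [blockUT, submatrix_vecMul_equiv]

  rw [show (x ∘ ⇑finSumFinEquiv.symm.symm) = Sum.elim (fun i => x (Fin.castAdd d i))
      (fun k => x (Fin.natAdd n k)) from sumElim_comp x]
  rw [vecMul_fromBlocks]
  funext m
  simp only [Function.comp_apply]
  generalize finSumFinEquiv.symm m = s
  cases s <;> simp [vecMul, dotProduct, add_comm]

lemma vecMul_blockUT_castAdd (B : Matrix (Fin n) (Fin d) (ZMod 2)) (x : Fin (n + d) → ZMod 2)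
    (j : Fin n) : (x ᵥ* blockUT n d B) (Fin.castAdd d j) = x (Fin.castAdd d j) := by
  rw [vecMul_blockUT]
  simp

lemma vecMul_blockUT_natAdd (B : Matrix (Fin n) (Fin d) (ZMod 2)) (x : Fin (n + d) → ZMod 2)
    (k : Fin d) : (x ᵥ* blockUT n d B) (Fin.natAdd n k)
      = x (Fin.natAdd n k) + ∑ i : Fin n, x (Fin.castAdd d i) * B i k := by
  rw [vecMul_blockUT]
  simp

lemma blockUT_entry (A : Matrix (Fin n) (Fin d) (ZMod 2)) (i : Fin n) (k : Fin d) :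
    blockUT n d A (Fin.castAdd d i) (Fin.natAdd n k) = A i k := by
  simp [blockUT]

lemma blockUT_zero : blockUT n d 0 = 1 := by
  rw [blockUT, show (fromBlocks 1 (0 : Matrix (Fin n) (Fin d) (ZMod 2)) 0 1)
      = (1 : Matrix (Fin n ⊕ Fin d) (Fin n ⊕ Fin d) (ZMod 2)) from fromBlocks_one]
  exact submatrix_one_equiv _

lemma blockUT_mul (A A' : Matrix (Fin n) (Fin d) (ZMod 2)) :
    blockUT n d A * blockUT n d A' = blockUT n d (A + A') := by
  rw [blockUT, blockUT, blockUT, submatrix_mul_equiv, fromBlocks_multiply]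
  simp [add_comm]

lemma blockUT_inj {A A' : Matrix (Fin n) (Fin d) (ZMod 2)}
    (h : blockUT n d A = blockUT n d A') : A = A' := by
  ext i k
  rw [← blockUT_entry A i k, ← blockUT_entry A' i k, h]

lemma vecMul_cancel {m : ℕ} {M N : Matrix (Fin m) (Fin m) (ZMod 2)}
    (h : ∀ x, x ᵥ* M = x ᵥ* N) : M = N := by
  ext a b
  have := congrFun (h (Pi.single a 1)) b
  simpa [vecMul, dotProduct, Pi.single_apply] using this

lemma vecMul_blockUT_tail {u : Fin (n + d) → ZMod 2} (hu : ∀ i : Fin n, u (Fin.castAdd d i) = 0)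
    (A : Matrix (Fin n) (Fin d) (ZMod 2)) : u ᵥ* blockUT n d A = u := by
  funext m
  induction m using Fin.addCases with
  | left j => exact vecMul_blockUT_castAdd A u j
  | right k =>
    rw [vecMul_blockUT_natAdd]
    simp [hu]

end helpers

/-- For a practical hidden sum `T∘` with `U(T∘) ⊇ Span{e_{n+1},…,e_{n+d}}`
and matrices `B_{e_i}` as in the structure theorem, the `n × n` matrix `𝔅∘` over `F_{2^d}`
whose `(i,j)` entry is the `j`-th row of `B_{e_i}` (viewed in `F_{2^d}` via an `F₂`-linear
identification `φ`) is symmetric with zero diagonal, and `dim U(T∘) = d`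
(i.e. `U(T∘)` equals the span of the last `d` basis vectors) iff `𝔅∘` is full rank over
`F₂` (rows of the expanded `n × nd` binary matrix are linearly independent). -/
theorem stmt6 (n d : ℕ) (hn : 2 ≤ n) (hd : 1 ≤ d)
    (T : Subgroup (Equiv.Perm (Fin (n + d) → ZMod 2)))
    (haff : ∀ g ∈ T, ∃ (L : (Fin (n + d) → ZMod 2) ≃ₗ[ZMod 2] (Fin (n + d) → ZMod 2))
      (c : Fin (n + d) → ZMod 2), ∀ x, g x = L x + c)
    (hreg : ∀ x y : Fin (n + d) → ZMod 2,
      ∃! g : Equiv.Perm (Fin (n + d) → ZMod 2), g ∈ T ∧ g x = y)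
    (hab : ∀ g ∈ T, ∀ h ∈ T, g * h = h * g)
    (helem : ∀ g ∈ T, g * g = 1)
    (τ : (Fin (n + d) → ZMod 2) → Equiv.Perm (Fin (n + d) → ZMod 2))
    (hτmem : ∀ a, τ a ∈ T) (hτ0 : ∀ a, τ a 0 = a)
    (B : (Fin (n + d) → ZMod 2) → Matrix (Fin n) (Fin d) (ZMod 2))
    (hB : ∀ v x, τ v x = x ᵥ* blockUT n d (B v) + v)
    (φ : (Fin d → ZMod 2) ≃ₗ[ZMod 2] GaloisField 2 d)
    (𝔅 : Matrix (Fin n) (Fin n) (GaloisField 2 d))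
    (h𝔅 : ∀ i j : Fin n,
      𝔅 i j = φ (fun k => B (Pi.single (Fin.castAdd d i) (1 : ZMod 2)) j k)) :
    𝔅.IsSymm ∧ (∀ i, 𝔅 i i = 0) ∧
    (({v : Fin (n + d) → ZMod 2 | ∀ x, τ v x = x + v}
        = {v : Fin (n + d) → ZMod 2 | ∀ i : Fin (n + d), (i : ℕ) < n → v i = 0})
      ↔ LinearIndependent (ZMod 2)
          (fun i : Fin n => fun p : Fin n × Fin d =>
            B (Pi.single (Fin.castAdd d i) (1 : ZMod 2)) p.1 p.2)) := by
  have zmod2 : ∀ x : ZMod 2, x = 0 ∨ x = 1 := by decide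
  have addself : ∀ x : ZMod 2, x + x = 0 := by decide
  have tau_mul : ∀ u v, τ u * τ v = τ (τ u v) := by
    intro u v
    exact (hreg 0 (τ u v)).unique
      ⟨T.mul_mem (hτmem u) (hτmem v), by rw [Equiv.Perm.mul_apply, hτ0]⟩
      ⟨hτmem _, hτ0 _⟩
  have happly : ∀ u v x, τ u (τ v x) = τ (τ u v) x := by
    intro u v x; rw [← Equiv.Perm.mul_apply, tau_mul]
  have hBadd : ∀ u v, B (τ u v) = B v + B u := by
    intro u v
    have hmat : ∀ x, x ᵥ* (blockUT n d (B v) * blockUT n d (B u))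
        = x ᵥ* blockUT n d (B (τ u v)) := by
      intro x
      have h3 : (x ᵥ* blockUT n d (B v) + v) ᵥ* blockUT n d (B u) + u
          = x ᵥ* blockUT n d (B (τ u v)) + (v ᵥ* blockUT n d (B u) + u) := by
        rw [← hB u, ← hB v, happly, hB (τ u v) x]
        exact congrArg (x ᵥ* blockUT n d (B (τ u v)) + ·) (hB u v)
      rw [add_vecMul, vecMul_vecMul, add_assoc] at h3
      exact add_right_cancel h3
    have := blockUT_inj ((blockUT_mul (B v) (B u)).symm.trans (vecMul_cancel hmat))
    exact this.symm
  have hBtail : ∀ u : Fin (n + d) → ZMod 2,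
      (∀ i : Fin n, u (Fin.castAdd d i) = 0) → B u = 0 := by
    intro u hu
    ext j k
    have hc := congrArg (fun g : Equiv.Perm (Fin (n + d) → ZMod 2) => g 0)
      (hab (τ (Pi.single (Fin.castAdd d j) 1)) (hτmem _) (τ u) (hτmem u))
    simp only [Equiv.Perm.mul_apply, hτ0] at hc
    rw [hB, hB, vecMul_blockUT_tail hu] at hc
    have hc2 := congrFun hc (Fin.natAdd n k)
    simp only [Pi.add_apply, vecMul_blockUT_natAdd, single_natAdd, single_sum_mul,
      one_mul, zero_add, add_zero] at hc2
    simpa using hc2.symm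
  have hsymB : ∀ i j : Fin n, ∀ k : Fin d,
      B (Pi.single (Fin.castAdd d i) 1) j k = B (Pi.single (Fin.castAdd d j) 1) i k := by
    intro i j k
    have hc := congrArg (fun g : Equiv.Perm (Fin (n + d) → ZMod 2) => g 0)
      (hab (τ (Pi.single (Fin.castAdd d i) 1)) (hτmem _)
           (τ (Pi.single (Fin.castAdd d j) 1)) (hτmem _))
    simp only [Equiv.Perm.mul_apply, hτ0] at hc
    rw [hB, hB] at hc
    have hc2 := congrFun hc (Fin.natAdd n k)
    simp only [Pi.add_apply, vecMul_blockUT_natAdd, single_natAdd, single_sum_mul,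
      one_mul, zero_add, add_zero] at hc2
    exact hc2
  have hdiagB : ∀ i : Fin n, ∀ k : Fin d, B (Pi.single (Fin.castAdd d i) 1) i k = 0 := by
    intro i k
    have hc := congrArg (fun g : Equiv.Perm (Fin (n + d) → ZMod 2) => g 0)
      (helem (τ (Pi.single (Fin.castAdd d i) 1)) (hτmem _))
    simp only [Equiv.Perm.mul_apply, hτ0, Equiv.Perm.coe_one, id_eq] at hc
    rw [hB] at hc
    have hc2 := congrFun hc (Fin.natAdd n k)
    simp only [Pi.add_apply, vecMul_blockUT_natAdd, single_natAdd, single_sum_mul,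
      one_mul, zero_add, add_zero, Pi.zero_apply] at hc2
    exact hc2
  have hBsum : ∀ v : Fin (n + d) → ZMod 2,
      B v = ∑ i : Fin n, v (Fin.castAdd d i) • B (Pi.single (Fin.castAdd d i) 1) := by
    suffices h : ∀ s : Finset (Fin n), ∀ v : Fin (n + d) → ZMod 2,
        (∀ i ∉ s, v (Fin.castAdd d i) = 0) →
        B v = ∑ i ∈ s, v (Fin.castAdd d i) • B (Pi.single (Fin.castAdd d i) 1) by
      intro v
      exact h Finset.univ v (fun i hi => absurd (Finset.mem_univ i) hi)
    intro s
    induction s using Finset.induction_on with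
    | empty =>
      intro v hv
      rw [Finset.sum_empty]
      exact hBtail v (fun i => hv i (Finset.notMem_empty i))
    | @insert a s ha ih =>
      intro v hv
      rcases zmod2 (v (Fin.castAdd d a)) with h0 | h1
      · rw [Finset.sum_insert ha, h0, zero_smul, zero_add]
        refine ih v (fun i hi => ?_)
        rcases eq_or_ne i a with rfl | hne
        · exact h0
        · exact hv i (by simp [Finset.mem_insert, hne, hi])
      · have hw := hBadd (Pi.single (Fin.castAdd d a) 1) v
        have hwv : ∀ j : Fin n, (τ (Pi.single (Fin.castAdd d a) 1) v) (Fin.castAdd d j)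
            = v (Fin.castAdd d j)
              + (Pi.single (Fin.castAdd d a) (1 : ZMod 2) : Fin (n + d) → ZMod 2)
                  (Fin.castAdd d j) := by
          intro j
          rw [hB]
          simp only [Pi.add_apply, vecMul_blockUT_castAdd]
        have hsup : ∀ i ∉ s, (τ (Pi.single (Fin.castAdd d a) 1) v) (Fin.castAdd d i) = 0 := by
          intro i hi
          rw [hwv]
          rcases eq_or_ne i a with rfl | hne
          · rw [h1, single_castAdd, if_pos rfl]; decide
          · rw [hv i (by simp [Finset.mem_insert, hne, hi]), single_castAdd, if_neg hne,
              add_zero]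
        have hBw := ih _ hsup
        have hcancel : B v = B (τ (Pi.single (Fin.castAdd d a) 1) v)
            + B (Pi.single (Fin.castAdd d a) 1) := by
          rw [hw, add_assoc]
          ext p q
          simp only [Matrix.add_apply, addself, add_zero]
        rw [hcancel, hBw, Finset.sum_insert ha, h1, one_smul, add_comm]
        congr 1
        refine Finset.sum_congr rfl (fun j hj => ?_)
        have hja : j ≠ a := fun h => ha (h ▸ hj)
        rw [hwv, single_castAdd, if_neg hja, add_zero]
  have hmem0 : ∀ v : Fin (n + d) → ZMod 2, (∀ x, τ v x = x + v) ↔ B v = 0 := by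
    intro v
    constructor
    · intro h
      ext j k
      have h2 := h (Pi.single (Fin.castAdd d j) 1)
      rw [hB] at h2
      have h3 := congrFun h2 (Fin.natAdd n k)
      simp only [Pi.add_apply, vecMul_blockUT_natAdd, single_natAdd, single_sum_mul,
        one_mul, zero_add, add_zero] at h3
      simpa using h3
    · intro h x
      rw [hB, h, blockUT_zero, vecMul_one]
  refine ⟨?_, ?_, ?_⟩
  · show 𝔅ᵀ = 𝔅
    ext i j
    rw [transpose_apply, h𝔅, h𝔅]
    exact congrArg φ (funext fun k => hsymB j i k)
  · intro i
    rw [h𝔅]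
    rw [show (fun k => B (Pi.single (Fin.castAdd d i) (1 : ZMod 2)) i k) = 0 from
      funext fun k => hdiagB i k]
    exact map_zero φ
  · constructor
    · intro hset
      rw [Fintype.linearIndependent_iff]
      intro g hg i
      set v : Fin (n + d) → ZMod 2 := ∑ j : Fin n, Pi.single (Fin.castAdd d j) (g j) with hv
      have hvc : ∀ i0 : Fin n, v (Fin.castAdd d i0) = g i0 := by
        intro i0
        rw [hv, Finset.sum_apply, Finset.sum_eq_single i0]
        · rw [single_castAdd, if_pos rfl]
        · intro j _ hj
          rw [single_castAdd, if_neg (fun h => hj h.symm)]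
        · intro h; exact absurd (Finset.mem_univ i0) h
      have hBv0 : B v = 0 := by
        rw [hBsum v]
        have hg' : ∑ i : Fin n, g i • B (Pi.single (Fin.castAdd d i) 1) = 0 := by
          ext p q
          have h2 := congrFun hg (p, q)
          simpa [Finset.sum_apply, Matrix.sum_apply] using h2
        rw [Finset.sum_congr rfl
          (fun i _ => by rw [hvc i] :
            ∀ i ∈ Finset.univ, v (Fin.castAdd d i) • B (Pi.single (Fin.castAdd d i) 1)
              = g i • B (Pi.single (Fin.castAdd d i) 1))]
        exact hg'
      have hvW : v ∈ {v : Fin (n + d) → ZMod 2 |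
          ∀ i : Fin (n + d), (i : ℕ) < n → v i = 0} := by
        rw [← hset]
        exact (hmem0 v).mpr hBv0
      have h5 := hvW (Fin.castAdd d i) (by simpa using i.isLt)
      rwa [hvc i] at h5
    · intro hli
      ext v
      simp only [Set.mem_setOf_eq]
      constructor
      · intro hv m hm
        have hB0 : B v = 0 := (hmem0 v).mp hv
        rw [hBsum v] at hB0
        have hco : ∀ i : Fin n, v (Fin.castAdd d i) = 0 := by
          refine Fintype.linearIndependent_iff.mp hli (fun i => v (Fin.castAdd d i)) ?_
          funext p
          have h2 := congrFun (congrFun hB0 p.1) p.2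
          simpa [Finset.sum_apply, Matrix.sum_apply] using h2
        have hmeq : m = Fin.castAdd d ⟨(m : ℕ), hm⟩ := by
          apply Fin.ext
          simp
        rw [hmeq]
        exact hco _
      · intro hv x
        have h0 : B v = 0 :=
          hBtail v (fun i => hv (Fin.castAdd d i) (by simpa using i.isLt))
        exact (hmem0 v).mpr h0 x
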